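/- arXiv:math/0210308 — 4 statements merged into one kernel-verified Lean document; each statement's English description precedes it below -/
import Mathlib

section
/- Let U be a group acting by isometries on an ℝ-tree X, and suppose the action is D-acylindrical for some D ≥ 0. Let y ∈ X with d(y, X_U) = R, where X_U denotes the minimal U-invariant subtree if U has no global fixed point, and the set of points fixed by all of U if U fixes a point. Then for every u ∈ U with u ≠ 1, one has d(y, u·y) ≥ 2R − 2D. -/
open Metric Pointwise

/-- An `ℝ`-tree: a geodesic metric space satisfying the four-point (0-hyperbolicity)
condition; equivalently, every pair of points is joined by a unique arc and that arc
is a geodesic segment. -/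
class IsRTree (X : Type*) [MetricSpace X] : Prop where
  exists_geodesic : ∀ x y : X, ∃ f : ℝ → X, f 0 = x ∧ f (dist x y) = y ∧
    ∀ s ∈ Set.Icc (0 : ℝ) (dist x y), ∀ t ∈ Set.Icc (0 : ℝ) (dist x y),
      dist (f s) (f t) = |s - t|
  fourPoint : ∀ x y z w : X,
    dist x y + dist z w ≤ max (dist x z + dist y w) (dist x w + dist y z)

/-- A `D`-acylindrical action: every `g ≠ 1` has fixed-point set of diameter at most `D`. -/
def IsAcylindrical (G : Type*) (X : Type*) [Group G] [MetricSpace X] [MulAction G X]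
    (D : ℝ) : Prop :=
  ∀ g : G, g ≠ 1 → ∀ x y : X, g • x = x → g • y = y → dist x y ≤ D

/-- A subtree of an ℝ-tree: a nonempty closed connected subset. -/
def IsSubtree {X : Type*} [MetricSpace X] (T : Set X) : Prop :=
  IsClosed T ∧ IsConnected T

/-- `T` is the minimal `U`-invariant subtree of `X`: it is a `U`-invariant subtree
contained in every `U`-invariant subtree. -/
def IsMinimalInvariantSubtree (U : Type*) {X : Type*} [Group U] [MetricSpace X]
    [MulAction U X] (T : Set X) : Prop :=
  (IsSubtree T ∧ ∀ u : U, u • T = T) ∧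
    ∀ T' : Set X, IsSubtree T' → (∀ u : U, u • T' = T') → T ⊆ T'

/-- `Xu` is the set `X_U`: the set of points fixed by all of `U` if `U` fixes a point,
and the minimal `U`-invariant subtree otherwise. -/
def IsXU (U : Type*) {X : Type*} [Group U] [MetricSpace X] [MulAction U X]
    (Xu : Set X) : Prop :=
  ((∃ x : X, ∀ u : U, u • x = x) ∧ Xu = {x : X | ∀ u : U, u • x = x}) ∨
    ((¬ ∃ x : X, ∀ u : U, u • x = x) ∧ IsMinimalInvariantSubtree U Xu)

section Aux

variable {X : Type*} [MetricSpace X]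

/-- `b` lies on the segment from `a` to `c`. -/
def TBtw (a b c : X) : Prop := dist a b + dist b c = dist a c

lemma tbtw_symm {a b c : X} (h : TBtw a b c) : TBtw c b a := by
  unfold TBtw at h ⊢
  rw [dist_comm c b, dist_comm b a, dist_comm c a]
  linarith

variable [IsRTree X]

lemma tbtw_unique {t t' x x' : X} (h1 : TBtw t x t') (h2 : TBtw t x' t')
    (h3 : dist t x = dist t x') : x = x' := by
  have h4 := IsRTree.fourPoint x x' t t'
  unfold TBtw at h1 h2
  rw [← dist_eq_zero (x := x) (y := x')]
  have c1 : dist x t = dist t x := dist_comm _ _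
  have c2 : dist x' t = dist t x' := dist_comm _ _
  have d1 := dist_nonneg (x := x) (y := x')
  rcases max_choice (dist x t + dist x' t') (dist x t' + dist x' t) with h | h <;>
    rw [h] at h4 <;> linarith

lemma tbtw_split {z a c x : X} (h : TBtw z c a) : TBtw z c x ∨ TBtw x c a := by
  have h4 := IsRTree.fourPoint z a c x
  unfold TBtw at h ⊢
  have t1 := dist_triangle z c x
  have t2 := dist_triangle x c a
  have c1 : dist a x = dist x a := dist_comm _ _
  have c2 : dist a c = dist c a := dist_comm _ _
  have c3 : dist c x = dist x c := dist_comm _ _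
  rcases max_choice (dist z c + dist a x) (dist z x + dist a c) with h5 | h5 <;>
    rw [h5] at h4
  · right; linarith
  · left; linarith

lemma exists_median (x y z : X) :
    ∃ m : X, TBtw x m y ∧ TBtw x m z ∧ TBtw y m z ∧
      dist x m = (dist x y + dist x z - dist y z) / 2 := by
  obtain ⟨f, hf0, hfd, hiso⟩ := IsRTree.exists_geodesic x y
  set s := (dist x y + dist x z - dist y z) / 2 with hs
  have t1 := dist_triangle y x z
  have t2 := dist_triangle x y z
  have hs0 : 0 ≤ s := by rw [hs]; rw [dist_comm y x] at t1; linarith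
  have hs1 : s ≤ dist x y := by rw [hs]; linarith
  have hd0 : (0 : ℝ) ∈ Set.Icc (0 : ℝ) (dist x y) := ⟨le_refl _, dist_nonneg⟩
  have hds : s ∈ Set.Icc (0 : ℝ) (dist x y) := ⟨hs0, hs1⟩
  have hdd : dist x y ∈ Set.Icc (0 : ℝ) (dist x y) := ⟨dist_nonneg, le_refl _⟩
  have e1 : dist x (f s) = s := by
    have h := hiso 0 hd0 s hds
    rw [hf0] at h; rw [h, abs_of_nonpos (by linarith)]; ring
  have e2 : dist (f s) y = dist x y - s := by
    have h := hiso s hds (dist x y) hdd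
    rw [hfd] at h; rw [h, abs_of_nonpos (by linarith)]; ring
  have e3 : dist (f s) z = dist x z - s := by
    have h4 := IsRTree.fourPoint (f s) z x y
    have tt := dist_triangle x (f s) z
    have c1 : dist (f s) x = s := by rw [dist_comm]; exact e1
    have c3 : dist z y = dist y z := dist_comm _ _
    have c4 : dist z x = dist x z := dist_comm _ _
    rcases max_choice (dist (f s) x + dist z y) (dist (f s) y + dist z x) with h5 | h5 <;>
      rw [h5] at h4 <;> linarith
  refine ⟨f s, ?_, ?_, ?_, ?_⟩
  · unfold TBtw; rw [e1, e2]; ring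
  · unfold TBtw; rw [e1, e3]; ring
  · unfold TBtw; rw [dist_comm y (f s), e2, e3, hs]; ring
  · exact e1

lemma exists_proj {S : Set X} (hne : S.Nonempty) (hcl : IsClosed S)
    (hconv : ∀ a b c : X, a ∈ S → b ∈ S → TBtw a c b → c ∈ S) (y : X) :
    ∃ p ∈ S, dist y p = Metric.infDist y S := by
  obtain ⟨t1, ht1⟩ := hne
  set r := Metric.infDist y S with hrdef
  have hr0 : 0 ≤ r := Metric.infDist_nonneg
  have hrt : r ≤ dist y t1 := Metric.infDist_le_dist_of_mem ht1
  obtain ⟨f, hf0, hfd, hiso⟩ := IsRTree.exists_geodesic y t1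
  have hrIcc : r ∈ Set.Icc (0 : ℝ) (dist y t1) := ⟨hr0, hrt⟩
  have hd0 : (0 : ℝ) ∈ Set.Icc (0 : ℝ) (dist y t1) := ⟨le_refl _, dist_nonneg⟩
  have hyfr : dist y (f r) = r := by
    have := hiso 0 hd0 r hrIcc; rw [hf0] at this; rw [this]
    rw [abs_of_nonpos (by linarith)]; ring
  refine ⟨f r, ?_, hyfr⟩
  rw [← hcl.closure_eq, Metric.mem_closure_iff]
  intro ε hε
  obtain ⟨t', ht', hdt'⟩ := (Metric.infDist_lt_iff ⟨t1, ht1⟩).mp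
    (show Metric.infDist y S < r + ε by rw [← hrdef]; linarith)
  obtain ⟨m, hm1, hm2, hm3, hm4⟩ := exists_median y t1 t'
  have hmS : m ∈ S := hconv t1 t' m ht1 ht' hm3
  have hrm : r ≤ dist y m := Metric.infDist_le_dist_of_mem hmS
  have hmy : dist y m ≤ dist y t' := by
    have := dist_triangle y t' t1
    have c1 : dist t' t1 = dist t1 t' := dist_comm _ _
    linarith
  have hmIcc : dist y m ∈ Set.Icc (0 : ℝ) (dist y t1) := by
    constructor
    · exact dist_nonneg
    · unfold TBtw at hm1; have := dist_nonneg (x := m) (y := t1); linarith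
  have hfm : f (dist y m) = m := by
    apply tbtw_unique (t := y) (t' := t1) _ hm1
    · have := hiso 0 hd0 (dist y m) hmIcc; rw [hf0] at this; rw [this]
      rw [abs_of_nonpos (by linarith [hmIcc.1])]; ring
    · unfold TBtw
      have e1 : dist y (f (dist y m)) = dist y m := by
        have := hiso 0 hd0 (dist y m) hmIcc; rw [hf0] at this; rw [this]
        rw [abs_of_nonpos (by linarith [hmIcc.1])]; ring
      have e2 : dist (f (dist y m)) t1 = dist y t1 - dist y m := by
        have := hiso (dist y m) hmIcc (dist y t1) ⟨dist_nonneg, le_refl _⟩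
        rw [hfd] at this; rw [this]
        rw [abs_of_nonpos (by linarith [hmIcc.2])]; ring
      rw [e1, e2]; ring
  refine ⟨m, hmS, ?_⟩
  rw [← hfm]
  rw [hiso r hrIcc (dist y m) hmIcc]
  rw [abs_of_nonpos (by linarith)]
  linarith

lemma convex_of_connected {S : Set X} (hS : IsConnected S) :
    ∀ a b c : X, a ∈ S → b ∈ S → TBtw a c b → c ∈ S := by
  intro a b c ha hb hbtw
  by_contra hc
  set A := {x : X | ¬ TBtw x c a} with hA
  set B := {x : X | TBtw x c a ∧ x ≠ c} with hB
  have hca : c ≠ a := fun h => hc (h ▸ ha)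
  have hAopen : IsOpen A := by
    rw [Metric.isOpen_iff]
    intro x hx
    have hxc : x ≠ c := by
      intro h; subst h
      exact hx (by unfold TBtw; rw [dist_self]; ring)
    refine ⟨dist x c, dist_pos.mpr hxc, ?_⟩
    intro z hz
    rw [Metric.mem_ball] at hz
    intro hzca
    rcases tbtw_split (x := x) hzca with h | h
    · unfold TBtw at h
      have h1 : (0:ℝ) ≤ dist z c := dist_nonneg
      have h2 : dist z x = dist x z := dist_comm _ _
      have h3 : dist c x = dist x c := dist_comm _ _
      linarith
    · exact hx h
  have hBopen : IsOpen B := by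
    rw [Metric.isOpen_iff]
    intro x hx
    obtain ⟨hx1, hx2⟩ := hx
    refine ⟨dist x c, dist_pos.mpr hx2, ?_⟩
    intro z hz
    rw [Metric.mem_ball] at hz
    rw [dist_comm z x] at hz
    constructor
    · rcases tbtw_split (x := z) hx1 with h | h
      · unfold TBtw at h
        have : dist c z ≥ 0 := dist_nonneg
        linarith
      · exact h
    · intro h; subst h; linarith
  have hcover : S ⊆ A ∪ B := by
    intro x hx
    by_cases h : TBtw x c a
    · right; exact ⟨h, fun he => hc (he ▸ hx)⟩
    · left; exact h
  have haA : a ∈ A := by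
    intro h
    unfold TBtw at h
    rw [dist_self] at h
    have h1 : dist a c = 0 := by have := dist_nonneg (x := c) (y := a); have := dist_nonneg (x := a) (y := c); linarith
    exact hca (dist_eq_zero.mp h1).symm
  have hbB : b ∈ B := ⟨tbtw_symm hbtw, fun he => hc (he ▸ hb)⟩
  obtain ⟨x, -, hxA, hxB⟩ := hS.isPreconnected A B hAopen hBopen hcover ⟨a, ha, haA⟩ ⟨b, hb, hbB⟩
  exact hxA hxB.1

end Aux

/-- Lemma 3.3(1): if `d(y, X_U) = R` then `d(y, u y) ≥ 2R - 2D` for every `u ≠ 1`. -/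
theorem dist_smul_ge_of_acylindrical
    {U : Type*} [Group U] {X : Type*} [MetricSpace X] [IsRTree X]
    [MulAction U X] [IsIsometricSMul U X]
    (D : ℝ) (hD : 0 ≤ D) (hacyl : IsAcylindrical U X D)
    (Xu : Set X) (hXu : IsXU U Xu)
    (y : X) (R : ℝ) (hR : Metric.infDist y Xu = R)
    (u : U) (hu : u ≠ 1) :
    2 * R - 2 * D ≤ dist y (u • y) := by
  rcases le_or_gt (2 * R - 2 * D) 0 with h0 | h0
  · linarith [dist_nonneg (x := y) (y := u • y)]
  rcases Set.eq_empty_or_nonempty Xu with rfl | hne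
  · rw [Metric.infDist_empty] at hR; linarith
  have key : (∀ a b c : X, a ∈ Xu → b ∈ Xu → TBtw a c b → c ∈ Xu) ∧
      IsClosed Xu ∧ ∀ g : U, ∀ x ∈ Xu, g • x ∈ Xu := by
    have hXu' : ((∃ x : X, ∀ g : U, g • x = x) ∧ Xu = {x : X | ∀ g : U, g • x = x}) ∨
        ((¬ ∃ x : X, ∀ g : U, g • x = x) ∧
          ((IsSubtree Xu ∧ ∀ g : U, g • Xu = Xu) ∧
            ∀ T' : Set X, IsSubtree T' → (∀ g : U, g • T' = T') → Xu ⊆ T')) := hXu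
    rcases hXu' with ⟨-, rfl⟩ | ⟨-, ⟨⟨hcl, hconn⟩, hinvT⟩, -⟩
    · refine ⟨?_, ?_, ?_⟩
      · intro a b c ha hb hbtw
        simp only [Set.mem_setOf_eq] at ha hb ⊢
        intro g
        have e1 : dist (g • a) (g • c) = dist a c := dist_smul g a c
        have e2 : dist (g • c) (g • b) = dist c b := dist_smul g c b
        rw [ha g] at e1
        rw [hb g] at e2
        refine tbtw_unique (t := a) (t' := b) ?_ hbtw e1
        unfold TBtw at hbtw ⊢
        rw [e1, e2]
        exact hbtw
      · have hset : {x : X | ∀ g : U, g • x = x} = ⋂ g : U, {x : X | g • x = x} := by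
          ext x; simp [Set.mem_iInter]
        rw [hset]
        exact isClosed_iInter fun g => isClosed_eq (continuous_const_smul g) continuous_id
      · intro g x hx
        simp only [Set.mem_setOf_eq] at hx ⊢
        rw [hx g]
        exact hx
    · refine ⟨convex_of_connected hconn, hcl, ?_⟩
      intro g x hx
      have := Set.smul_mem_smul_set (a := g) hx
      rwa [hinvT g] at this
  obtain ⟨hconv, hcl, hinv⟩ := key
  have hdy : ∀ x ∈ Xu, R ≤ dist y x := fun x hx => hR ▸ Metric.infDist_le_dist_of_mem hx
  obtain ⟨p, hpXu, hyp⟩ := exists_proj hne hcl hconv y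
  rw [hR] at hyp
  have hqXu : u • p ∈ Xu := hinv u p hpXu
  have hdYq : dist (u • y) (u • p) = R := by rw [dist_smul]; exact hyp
  have hdY : ∀ x ∈ Xu, R ≤ dist (u • y) x := by
    intro x hx
    have h1 : dist (u • y) x = dist y (u⁻¹ • x) := by
      rw [← dist_smul u⁻¹ (u • y) x, inv_smul_smul]
    rw [h1]
    exact hdy _ (hinv u⁻¹ x hx)
  -- Claim A: the geodesic from p to u•y passes through u•p
  have hAqY : TBtw p (u • p) (u • y) := by
    obtain ⟨m, hA1, hA2, hA3, -⟩ := exists_median (u • p) p (u • y)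
    have hmXu : m ∈ Xu := hconv (u • p) p m hqXu hpXu hA1
    have hmq : u • p = m := by
      rw [← dist_eq_zero]
      have h1 := hdY m hmXu
      have ea2 : dist (u • p) m + dist m (u • y) = dist (u • p) (u • y) := hA2
      have c1 : dist m (u • y) = dist (u • y) m := dist_comm _ _
      have c2 : dist (u • p) (u • y) = dist (u • y) (u • p) := dist_comm _ _
      have := dist_nonneg (x := u • p) (y := m)
      linarith [hdYq]
    rwa [← hmq] at hA3
  obtain ⟨w, hw1, hw2, hw3, -⟩ := exists_median y (u • y) p
  -- hw1 : TBtw y w (u•y), hw2 : TBtw y w p, hw3 : TBtw (u•y) w p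
  have e1 : dist y w + dist w (u • y) = dist y (u • y) := hw1
  have e2 : dist y w + dist w p = dist y p := hw2
  have e3 : dist (u • y) w + dist w p = dist (u • y) p := hw3
  have e4 : dist p (u • p) + dist (u • p) (u • y) = dist p (u • y) := hAqY
  have cc1 : dist w (u • y) = dist (u • y) w := dist_comm _ _
  have cc2 : dist w p = dist p w := dist_comm _ _
  have cc3 : dist (u • y) p = dist p (u • y) := dist_comm _ _
  have cc5 : dist (u • p) p = dist p (u • p) := dist_comm _ _
  have cc8 : dist (u • p) (u • y) = dist (u • y) (u • p) := dist_comm _ _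
  have h4 := IsRTree.fourPoint w (u • p) p (u • y)
  -- dist w (u•p) + dist p (u•y) ≤ max (dist w p + dist (u•p)(u•y)) (dist w (u•y) + dist (u•p) p)
  rcases le_total (dist p w) (dist p (u • p)) with hcase | hcase
  · -- L ≤ ℓ
    have hmax : max (dist w p + dist (u • p) (u • y)) (dist w (u • y) + dist (u • p) p) ≤
        dist p (u • y) + (dist p (u • p) - dist p w) := by
      apply max_le <;> linarith [hdYq]
    have hub : dist w (u • p) ≤ dist p (u • p) - dist p w := by linarith
    have hlow := dist_triangle p w (u • p)
    have hbtwpwq : TBtw p w (u • p) := by unfold TBtw; linarith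
    have hwXu : w ∈ Xu := hconv p (u • p) w hpXu hqXu hbtwpwq
    have h5 := hdy w hwXu
    have h6 := hdY p hpXu
    have h7 := dist_nonneg (x := w) (y := p)
    linarith
  · -- ℓ ≤ L
    have hmax : max (dist w p + dist (u • p) (u • y)) (dist w (u • y) + dist (u • p) p) ≤
        dist p (u • y) + (dist p w - dist p (u • p)) := by
      apply max_le <;> linarith [hdYq]
    have hub : dist w (u • p) ≤ dist p w - dist p (u • p) := by linarith
    have hyq : dist y (u • p) ≤ R - dist p (u • p) := by
      have := dist_triangle y w (u • p)
      linarith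
    have h5 := hdy (u • p) hqXu
    have hl0 : dist p (u • p) = 0 := le_antisymm (by linarith) dist_nonneg
    have hup : u • p = p := (dist_eq_zero.mp hl0).symm
    have s1 : dist p (u • w) = dist p w := by
      have := dist_smul u p w
      rwa [hup] at this
    have s3 : dist p (u • y) = dist p y := by
      have := dist_smul u p y
      rwa [hup] at this
    have hbtw1 : TBtw p (u • w) (u • y) := by
      show dist p (u • w) + dist (u • w) (u • y) = dist p (u • y)
      rw [s1, s3, dist_smul]
      have := tbtw_symm hw2
      exact this
    have huw : u • w = w := tbtw_unique hbtw1 (tbtw_symm hw3) s1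
    have hLD : dist w p ≤ D := hacyl u hu w p huw hup
    rw [hup] at hdYq
    linarith
end

section
/- Let U be a group acting by isometries on an ℝ-tree X, with the action D-acylindrical for some D ≥ 0. Then the set E(U) = { x ∈ X : u·x = x for some u ∈ U with u ≠ 1 } is contained in the closed D-neighborhood of X_U, where X_U denotes the minimal U-invariant subtree if U has no global fixed point, and the set of points fixed by all of U if U fixes a point. -/
open Metric Pointwise

section Aux
variable {X : Type*} [MetricSpace X] [IsRTree X]

/-- Two geodesics from `x` (to `q` and `q'`) agree up to the Gromov product. -/
lemma geodesic_coincide (x q q' : X) (f g : ℝ → X)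
    (hf0 : f 0 = x) (hfq : f (dist x q) = q)
    (hfi : ∀ s ∈ Set.Icc (0 : ℝ) (dist x q), ∀ t ∈ Set.Icc (0 : ℝ) (dist x q),
      dist (f s) (f t) = |s - t|)
    (hg0 : g 0 = x) (hgq : g (dist x q') = q')
    (hgi : ∀ s ∈ Set.Icc (0 : ℝ) (dist x q'), ∀ t ∈ Set.Icc (0 : ℝ) (dist x q'),
      dist (g s) (g t) = |s - t|)
    (s : ℝ) (hs0 : 0 ≤ s) (hs : 2 * s ≤ dist x q + dist x q' - dist q q') :
    f s = g s := by
  have htr1 : dist x q' ≤ dist x q + dist q q' := dist_triangle x q q'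
  have htr2 : dist x q ≤ dist x q' + dist q q' := by
    have := dist_triangle x q' q
    rw [dist_comm q' q] at this; linarith
  have hsxq : s ≤ dist x q := by linarith
  have hsxq' : s ≤ dist x q' := by linarith
  set p := f s with hp
  set p' := g s with hp'
  have hxp : dist x p = s := by
    have := hfi 0 ⟨le_refl _, dist_nonneg⟩ s ⟨hs0, hsxq⟩
    rw [hf0] at this; rw [this, abs_of_nonpos (by linarith)]; ring
  have hxp' : dist x p' = s := by
    have := hgi 0 ⟨le_refl _, dist_nonneg⟩ s ⟨hs0, hsxq'⟩
    rw [hg0] at this; rw [this, abs_of_nonpos (by linarith)]; ring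
  have hpq : dist p q = dist x q - s := by
    have := hfi s ⟨hs0, hsxq⟩ (dist x q) ⟨dist_nonneg, le_refl _⟩
    rw [hfq] at this; rw [this, abs_of_nonpos (by linarith)]; ring
  have hp'q' : dist p' q' = dist x q' - s := by
    have := hgi s ⟨hs0, hsxq'⟩ (dist x q') ⟨dist_nonneg, le_refl _⟩
    rw [hgq] at this; rw [this, abs_of_nonpos (by linarith)]; ring
  have hpq' : dist p q' ≤ dist x q' - s := by
    have h4 := IsRTree.fourPoint p q' q x
    rcases le_max_iff.mp h4 with h | h
    · rw [hpq, dist_comm q' x, dist_comm q x] at h; linarith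
    · rw [dist_comm q x, dist_comm p x, hxp, dist_comm q' q] at h; linarith
  have hpp : dist p p' ≤ 0 := by
    have h5 := IsRTree.fourPoint x q' p p'
    rcases le_max_iff.mp h5 with h | h
    · rw [hxp, dist_comm q' p', hp'q'] at h; linarith
    · rw [hxp', dist_comm q' p] at h; linarith
  exact dist_le_zero.mp hpp

/-- A point between two points of a connected subset of an ℝ-tree belongs to it. -/
lemma between_mem_of_preconnected {T : Set X} (hT : IsPreconnected T)
    {q q' p : X} (hq : q ∈ T) (hq' : q' ∈ T)
    (hbet : dist q p + dist p q' = dist q q') : p ∈ T := by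
  by_cases hpq : p = q
  · rwa [hpq]
  by_cases hpq' : p = q'
  · rwa [hpq']
  by_contra hp
  set A : Set X := {y | dist q y < dist p q + dist p y} with hA
  set B : Set X := {y | y ≠ p ∧ dist p q + dist p y ≤ dist q y} with hB
  have hAopen : IsOpen A := by
    apply isOpen_lt (continuous_const.dist continuous_id)
    exact continuous_const.add (continuous_const.dist continuous_id)
  have hBopen : IsOpen B := by
    rw [Metric.isOpen_iff]
    rintro y ⟨hyp, hy⟩
    refine ⟨dist p y, dist_pos.mpr fun h => hyp h.symm, fun y' hy' => ?_⟩
    rw [Metric.mem_ball] at hy'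
    have hy'p : y' ≠ p := by
      intro h
      rw [h] at hy'
      exact lt_irrefl _ hy'
    refine ⟨hy'p, ?_⟩
    have h4 := IsRTree.fourPoint q y y' p
    rcases le_max_iff.mp h4 with h | h
    · rw [dist_comm y' p, dist_comm y p] at h; linarith
    · rw [dist_comm y' p, dist_comm q p, dist_comm y y'] at h
      have h1 := dist_nonneg (x := p) (y := y')
      linarith
  have hsub : T ⊆ A ∪ B := by
    intro y hy
    rcases lt_or_ge (dist q y) (dist p q + dist p y) with h | h
    · exact Or.inl h
    · exact Or.inr ⟨fun hyeq => hp (hyeq ▸ hy), h⟩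
  have hqA : q ∈ T ∩ A := by
    refine ⟨hq, ?_⟩
    have : (0 : ℝ) < dist p q := dist_pos.mpr hpq
    simp only [hA, Set.mem_setOf_eq, dist_self]
    linarith
  have hq'B : q' ∈ T ∩ B := by
    refine ⟨hq', fun h => hpq' h.symm, ?_⟩
    rw [dist_comm q p] at hbet
    have := dist_triangle q p q'
    rw [dist_comm q p] at this
    linarith [abs_nonneg (0:ℝ)]
  obtain ⟨z, hzT, hzA, hzB⟩ := hT A B hAopen hBopen hsub ⟨q, hqA⟩ ⟨q', hq'B⟩
  exact absurd hzB.2 (not_le.mpr hzA)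

end Aux

/-- Lemma 3.3(2), first part: `E(U)` is contained in the closed `D`-neighborhood
of `X_U`. -/
theorem fixedPoints_subset_nbhd_of_minimal_subtree
    {U : Type*} [Group U] {X : Type*} [MetricSpace X] [IsRTree X]
    [MulAction U X] [IsIsometricSMul U X]
    (D : ℝ) (hD : 0 ≤ D) (hacyl : IsAcylindrical U X D)
    (Xu : Set X) (hXu : IsXU U Xu) :
    ∀ x : X, (∃ u : U, u ≠ 1 ∧ u • x = x) → Metric.infDist x Xu ≤ D := by
  intro x ⟨u, hu, hux⟩
  rcases hXu with ⟨⟨p, hp⟩, hset⟩ | ⟨_, hmin⟩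
  · have hpXu : p ∈ Xu := by rw [hset]; exact hp
    have hd : dist p x ≤ D := hacyl u hu p x (hp u) hux
    have := Metric.infDist_le_dist_of_mem (x := x) hpXu
    rw [dist_comm] at hd
    linarith
  · obtain ⟨⟨⟨_, hTconn⟩, hinv⟩, _⟩ := hmin
    obtain ⟨q, hq⟩ := hTconn.nonempty
    have hq' : u • q ∈ Xu := by
      rw [← hinv u]; exact Set.smul_mem_smul_set hq
    obtain ⟨f, hf0, hfq, hfi⟩ := IsRTree.exists_geodesic x q
    set q' := u • q with hq'def
    have hdist : dist x q' = dist x q := by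
      conv_lhs => rw [← hux]
      exact dist_smul u x q
    set s := (dist x q + dist x q' - dist q q') / 2 with hsdef
    have htr1 : dist q q' ≤ dist q x + dist x q' := dist_triangle q x q'
    have hs0 : 0 ≤ s := by
      rw [dist_comm q x] at htr1
      rw [hsdef]; linarith
    have hsle : s ≤ dist x q := by
      have := dist_nonneg (x := q) (y := q')
      rw [hsdef, hdist]; linarith
    -- the translated geodesic
    have hg0 : u • f 0 = x := by rw [hf0, hux]
    have hgq : u • f (dist x q') = q' := by rw [hdist, hfq]
    have hgi : ∀ a ∈ Set.Icc (0 : ℝ) (dist x q'), ∀ b ∈ Set.Icc (0 : ℝ) (dist x q'),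
        dist (u • f a) (u • f b) = |a - b| := by
      intro a ha b hb
      rw [dist_smul]
      exact hfi a (hdist ▸ ha) b (hdist ▸ hb)
    have hcoin := geodesic_coincide x q q' f (fun t => u • f t) hf0 hfq hfi hg0 hgq hgi s hs0
      (by rw [hsdef]; ring_nf; linarith [dist_nonneg (x := q) (y := q')])
    set m := f s with hm
    have hum : u • m = m := hcoin.symm
    have hxm : dist x m = s := by
      have := hfi 0 ⟨le_refl _, dist_nonneg⟩ s ⟨hs0, hsle⟩
      rw [hf0] at this; rw [hm, this, abs_of_nonpos (by linarith)]; ring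
    have hmq : dist m q = dist x q - s := by
      have := hfi s ⟨hs0, hsle⟩ (dist x q) ⟨dist_nonneg, le_refl _⟩
      rw [hfq] at this; rw [hm, this, abs_of_nonpos (by linarith)]; ring
    have hmq' : dist m q' = dist x q - s := by
      rw [hq'def, ← hum, dist_smul, hmq]
    have hbet : dist q m + dist m q' = dist q q' := by
      rw [dist_comm q m, hmq, hmq']
      rw [hsdef, hdist]; ring
    have hmem : m ∈ Xu := between_mem_of_preconnected hTconn.isPreconnected hq hq' hbet
    have hDm : dist x m ≤ D := hacyl u hu x m hux hum
    have := Metric.infDist_le_dist_of_mem (x := x) hmem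
    linarith
end

section
/- Let U be a group acting by isometries on an ℝ-tree X, with the action D-acylindrical for some D ≥ 0. Then the subtrees X(U) and X_U are D-Hausdorff close, i.e. the Hausdorff distance between X(U) and X_U is at most D. Here X_U denotes the minimal U-invariant subtree if U has no global fixed point and the set of points fixed by all of U otherwise, and X(U) denotes the smallest U-invariant subtree of X containing X_U ∪ E(U). -/
open Metric Pointwise

/-- The set `E(U)` of points fixed by some nontrivial element of `U`. -/
def EU (U : Type*) {X : Type*} [Group U] [MetricSpace X] [MulAction U X] : Set X :=
  {x : X | ∃ u : U, u ≠ 1 ∧ u • x = x}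

/-- `T` is the smallest `U`-invariant subtree of `X` containing the set `A`. -/
def IsSmallestInvariantSubtreeContaining (U : Type*) {X : Type*} [Group U]
    [MetricSpace X] [MulAction U X] (A T : Set X) : Prop :=
  (IsSubtree T ∧ (∀ u : U, u • T = T) ∧ A ⊆ T) ∧
    ∀ T' : Set X, IsSubtree T' → (∀ u : U, u • T' = T') → A ⊆ T' → T ⊆ T'

set_option linter.unusedSectionVars false

section aux
variable {X : Type*} [MetricSpace X] [IsRTree X]

/-- Gromov-product form of the four-point condition (δ = 0). -/
lemma gromov_aux (x y z w : X) :
    min (dist x w + dist z w - dist x z) (dist z w + dist y w - dist z y)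
      ≤ dist x w + dist y w - dist x y := by
  have h := IsRTree.fourPoint x y z w
  have hc : dist y z = dist z y := dist_comm y z
  rcases le_max_iff.1 h with h1 | h1
  · exact le_trans (min_le_left _ _) (by linarith)
  · exact le_trans (min_le_right _ _) (by linarith)

/-- A point metrically between two points of a preconnected set lies in the set. -/
lemma mem_of_between {A : Set X} (hA : IsPreconnected A) {a b m : X}
    (ha : a ∈ A) (hb : b ∈ A) (hm : dist a m + dist m b = dist a b) : m ∈ A := by
  by_contra hmA
  have ham : a ≠ m := fun h => hmA (h ▸ ha)
  have hbm : b ≠ m := fun h => hmA (h ▸ hb)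
  set Uo : Set X := {z | dist z a < dist z m + dist a m} with hUo
  set Vo : Set X := {z | z ≠ m ∧ dist z m + dist a m ≤ dist z a} with hVo
  have hUopen : IsOpen Uo := by
    rw [Metric.isOpen_iff]
    intro z hz
    have hzm : z ≠ m := by
      intro h; subst h
      simp only [hUo, Set.mem_setOf_eq, dist_self, zero_add] at hz
      exact absurd (dist_comm z a ▸ hz) (lt_irrefl _)
    refine ⟨dist z m, dist_pos.2 hzm, fun z' hz' => ?_⟩
    have hzz' : dist z' z < dist z m := by rwa [Metric.mem_ball] at hz'
    have hg := gromov_aux z' a z m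
    have h1 : 0 < dist z' m + dist z m - dist z' z := by
      have := dist_triangle z m z'
      have := dist_comm z z'
      have := dist_comm z' m
      have := dist_comm m z'
      linarith [dist_triangle z z' m]
    have h2 : 0 < dist z m + dist a m - dist z a := by
      simp only [hUo, Set.mem_setOf_eq] at hz; linarith
    have : 0 < min (dist z' m + dist z m - dist z' z) (dist z m + dist a m - dist z a) :=
      lt_min h1 h2
    simp only [hUo, Set.mem_setOf_eq]
    linarith [le_trans this.le hg]
  have hVopen : IsOpen Vo := by
    rw [Metric.isOpen_iff]
    intro z hz
    obtain ⟨hzm, hzv⟩ := hz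
    refine ⟨dist z m, dist_pos.2 hzm, fun z' hz' => ?_⟩
    have hzz' : dist z' z < dist z m := by rwa [Metric.mem_ball] at hz'
    have hz'm : z' ≠ m := by
      intro h; subst h
      rw [dist_comm] at hzz'
      exact absurd hzz' (lt_irrefl _)
    refine ⟨hz'm, ?_⟩
    by_contra hcon
    push_neg at hcon
    -- z' ∈ Uo-side, propagate back to z
    have hg := gromov_aux z a z' m
    have h1 : 0 < dist z m + dist z' m - dist z z' := by
      linarith [dist_triangle z z' m, dist_comm z' z ▸ hzz']
    have h2 : 0 < dist z' m + dist a m - dist z' a := by linarith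
    have : 0 < min (dist z m + dist z' m - dist z z') (dist z' m + dist a m - dist z' a) :=
      lt_min h1 h2
    linarith [le_trans this.le hg]
  have hcover : A ⊆ Uo ∪ Vo := by
    intro z hz
    have hzm : z ≠ m := fun h => hmA (h ▸ hz)
    rcases lt_or_ge (dist z a) (dist z m + dist a m) with h | h
    · exact Or.inl h
    · exact Or.inr ⟨hzm, h⟩
  have haU : a ∈ A ∩ Uo := ⟨ha, by
    simp only [hUo, Set.mem_setOf_eq, dist_self]
    have h0 := dist_pos.2 ham
    linarith⟩
  have hbV : b ∈ A ∩ Vo := ⟨hb, hbm, by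
    have h1 : dist b m = dist m b := dist_comm b m
    have h2 : dist b a = dist a b := dist_comm b a
    linarith⟩
  obtain ⟨z, _, hzU, hzV⟩ := hA Uo Vo hUopen hVopen hcover ⟨a, haU⟩ ⟨b, hbV⟩
  exact absurd hzU (not_lt.2 hzV.2)

/-- Uniqueness of the point between `x` and `y` at a given distance from `x`. -/
lemma between_unique {x y m m' : X}
    (h1 : dist x m + dist m y = dist x y) (h2 : dist x m' + dist m' y = dist x y)
    (h3 : dist x m = dist x m') : m = m' := by
  have hg := gromov_aux m m' y x
  have e1 : dist m x = dist x m := dist_comm m x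
  have e2 : dist m' x = dist x m' := dist_comm m' x
  have e3 : dist y x = dist x y := dist_comm y x
  have e4 : dist y m' = dist m' y := dist_comm y m'
  have eA : dist m x + dist y x - dist m y = 2 * dist x m := by linarith
  have eB : dist y x + dist m' x - dist y m' = 2 * dist x m := by linarith
  rw [eA, eB, min_self] at hg
  have : dist m m' ≤ 0 := by linarith
  exact dist_le_zero.1 this

/-- Existence of a nearest point in a closed preconnected subset of an ℝ-tree. -/
lemma exists_nearest {A : Set X} (hcl : IsClosed A) (hconn : IsPreconnected A)
    {p : X} (hp : p ∈ A) (x : X) : ∃ q ∈ A, dist x q = infDist x A := by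
  obtain ⟨f, hf0, hfd, hf⟩ := IsRTree.exists_geodesic x p
  set d := dist x p with hd
  have hne : A.Nonempty := ⟨p, hp⟩
  set σ := infDist x A with hσ
  have hσ0 : 0 ≤ σ := infDist_nonneg
  have hσd : σ ≤ d := infDist_le_dist_of_mem hp
  have hdx : ∀ t ∈ Set.Icc (0:ℝ) d, dist x (f t) = t := by
    intro t ht
    have := hf 0 ⟨le_refl _, dist_nonneg⟩ t ht
    rw [hf0] at this
    rw [this, abs_sub_comm, sub_zero, abs_of_nonneg ht.1]
  have hdp : ∀ t ∈ Set.Icc (0:ℝ) d, dist (f t) p = d - t := by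
    intro t ht
    have := hf t ht d ⟨dist_nonneg, le_refl _⟩
    rw [hfd] at this
    rw [this, abs_of_nonpos (by linarith [ht.2]), neg_sub]
  -- key: for each b ∈ A, the point f s(b) is in A
  have key : ∀ b ∈ A, f ((dist x b + d - dist b p)/2) ∈ A ∧
      (dist x b + d - dist b p)/2 ≤ dist x b := by
    intro b hb
    set s := (dist x b + d - dist b p)/2 with hs
    have hs0 : 0 ≤ s := by
      have h := dist_triangle b x p
      have e := dist_comm b x
      simp only [hs]; linarith [hd]
    have hsd : s ≤ d := by
      have h := dist_triangle x p b
      have e : dist p b = dist b p := dist_comm p b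
      simp only [hs]; linarith [hd]
    have hsb : s ≤ dist x b := by
      have h := dist_triangle x b p
      simp only [hs]; linarith [hd]
    have hsI : s ∈ Set.Icc (0:ℝ) d := ⟨hs0, hsd⟩
    set m := f s with hm
    have hxm : dist x m = s := hdx s hsI
    have hmp : dist m p = d - s := hdp s hsI
    have hbm : dist b m ≤ dist x b - s := by
      have hg := gromov_aux b m p x
      have e1 : dist b x = dist x b := dist_comm b x
      have e2 : dist p x = dist x p := dist_comm p x
      have e3 : dist m x = dist x m := dist_comm m x
      have e4 : dist p m = dist m p := dist_comm p m
      have eA : dist b x + dist p x - dist b p = 2 * s := by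
        rw [e1, e2, ← hd]; simp only [hs]; ring
      have eB : dist p x + dist m x - dist p m = 2 * s := by
        rw [e2, e3, e4, ← hd, hxm, hmp]; ring
      rw [eA, eB, min_self] at hg
      linarith
    have hbetween : dist b m + dist m p = dist b p := by
      have hle : dist b m + dist m p ≤ dist b p := by
        rw [hmp]; simp only [hs] at hbm ⊢; linarith
      exact le_antisymm hle (dist_triangle b m p)
    exact ⟨mem_of_between hconn hb hp hbetween, hsb⟩
  -- f σ ∈ closure A = A
  have hmem : f σ ∈ A := by
    rw [← hcl.closure_eq]
    rw [Metric.mem_closure_iff]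
    intro ε hε
    obtain ⟨b, hb, hbd⟩ := (infDist_lt_iff hne).1 (by rw [← hσ]; linarith : infDist x A < σ + ε)
    set s := (dist x b + d - dist b p)/2 with hs
    obtain ⟨hmA, hsb⟩ := key b hb
    have hs0 : 0 ≤ s := by
      have h := dist_triangle b x p
      have e := dist_comm b x
      simp only [hs]; linarith [hd]
    have hsd : s ≤ d := by
      have h := dist_triangle x p b
      have e : dist p b = dist b p := dist_comm p b
      simp only [hs]; linarith [hd]
    have hxm : dist x (f s) = s := hdx s ⟨hs0, hsd⟩
    have hσs : σ ≤ s := by rw [← hxm, hσ]; exact infDist_le_dist_of_mem hmA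
    refine ⟨f s, hmA, ?_⟩
    have := hf σ ⟨hσ0, hσd⟩ s ⟨hs0, hsd⟩
    rw [this, abs_of_nonpos (by linarith), neg_sub]
    linarith
  exact ⟨f σ, hmem, hdx σ ⟨hσ0, hσd⟩⟩

/-- Uniqueness of the nearest point in a preconnected subset of an ℝ-tree. -/
lemma nearest_unique {A : Set X} (hconn : IsPreconnected A) {x q q' : X}
    (hq : q ∈ A) (hq' : q' ∈ A) (h : dist x q = infDist x A)
    (h' : dist x q' = infDist x A) : q = q' := by
  obtain ⟨f, hf0, hfd, hf⟩ := IsRTree.exists_geodesic q q'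
  set e := dist q q' with he
  have he0 : 0 ≤ e := dist_nonneg
  have hI : e/2 ∈ Set.Icc (0:ℝ) e := ⟨by linarith, by linarith⟩
  set m := f (e/2) with hm
  have h1 : dist q m = e/2 := by
    have := hf 0 ⟨le_refl _, he0⟩ (e/2) hI
    rw [hf0] at this
    rw [this, abs_sub_comm, sub_zero, abs_of_nonneg (by linarith)]
  have h2 : dist m q' = e/2 := by
    have := hf (e/2) hI e ⟨he0, le_refl _⟩
    rw [hfd] at this
    rw [this, abs_of_nonpos (by linarith), neg_sub]
    ring
  have hmA : m ∈ A := mem_of_between hconn hq hq' (by rw [h1, h2]; linarith)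
  have hσm : infDist x A ≤ dist x m := infDist_le_dist_of_mem hmA
  have hg := gromov_aux q q' x m
  have e1 : dist q m = dist m q := dist_comm q m  -- careful: gromov at basepoint m
  -- gromov_aux q q' x m : min (dist q m + dist x m - dist q x) (dist x m + dist q' m - dist x q')
  --   ≤ dist q m + dist q' m - dist q q'
  have e2 : dist q' m = dist m q' := dist_comm q' m
  have e3 : dist q x = dist x q := dist_comm q x
  have hRHS : dist q m + dist q' m - dist q q' = 0 := by rw [h1, e2, h2, ← he]; ring
  rw [hRHS] at hg
  have : e ≤ 0 := by
    rcases min_le_iff.1 hg with hc | hc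
    · have : dist q m + dist x m ≤ dist x q := by rw [← e3]; linarith
      rw [h1, h] at this
      linarith
    · have : dist x m + dist m q' ≤ dist x q' := by rw [← e2]; linarith
      rw [h2, h'] at this
      linarith
  rw [he] at this
  exact dist_le_zero.1 this

end aux

section aux2
variable {X : Type*} [MetricSpace X] [IsRTree X]

lemma geodesic_image_preconnected {f : ℝ → X} {d : ℝ}
    (hf : ∀ s ∈ Set.Icc (0:ℝ) d, ∀ t ∈ Set.Icc (0:ℝ) d, dist (f s) (f t) = |s - t|) :
    IsPreconnected (f '' Set.Icc 0 d) := by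
  apply isPreconnected_Icc.image
  apply LipschitzOnWith.continuousOn (K := 1)
  apply LipschitzOnWith.of_dist_le_mul
  intro a ha b hb
  rw [hf a ha b hb, Real.dist_eq, NNReal.coe_one, one_mul]

end aux2

/-- Lemma 3.3(2), second part: `X(U)` and `X_U` are `D`-Hausdorff close. -/
theorem XofU_hausdorff_close_XU
    {U : Type*} [Group U] {X : Type*} [MetricSpace X] [IsRTree X]
    [MulAction U X] [IsIsometricSMul U X]
    (D : ℝ) (hD : 0 ≤ D) (hacyl : IsAcylindrical U X D)
    (Xu : Set X) (hXu : IsXU U Xu)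
    (XU' : Set X) (hXU' : IsSmallestInvariantSubtreeContaining U (Xu ∪ EU U) XU') :
    (∀ x ∈ XU', Metric.infDist x Xu ≤ D) ∧ (∀ x ∈ Xu, Metric.infDist x XU' ≤ D) := by
  obtain ⟨⟨hXU'sub, hXU'inv, hXU'contains⟩, hXU'min⟩ := hXU'
  -- basic properties of Xu in both cases
  have props : IsClosed Xu ∧ Xu.Nonempty ∧ IsPreconnected Xu ∧ (∀ u : U, u • Xu = Xu) := by
    rcases hXu with ⟨⟨x0, hx0⟩, rfl⟩ | ⟨-, ⟨⟨⟨hcl, hne, hconn⟩, hinv⟩, -⟩⟩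
    · refine ⟨?_, ⟨x0, hx0⟩, ?_, ?_⟩
      · have hset : {x : X | ∀ u : U, u • x = x} = ⋂ u : U, {x : X | u • x = x} := by
          ext z; simp
        rw [hset]
        exact isClosed_iInter fun u =>
          isClosed_eq ((isometry_smul X u).continuous) continuous_id
      · apply isPreconnected_of_forall x0
        intro y hy
        obtain ⟨f, hf0, hfd, hf⟩ := IsRTree.exists_geodesic x0 y
        refine ⟨f '' Set.Icc 0 (dist x0 y), ?_, ⟨0, ⟨le_refl _, dist_nonneg⟩, hf0⟩,
          ⟨dist x0 y, ⟨dist_nonneg, le_refl _⟩, hfd⟩, geodesic_image_preconnected hf⟩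
        rintro z ⟨t, ht, rfl⟩ u
        have h1 : dist x0 (f t) = t := by
          have h := hf 0 ⟨le_refl _, dist_nonneg⟩ t ht
          rw [hf0] at h; rw [h, abs_sub_comm, sub_zero, abs_of_nonneg ht.1]
        have h2 : dist (f t) y = dist x0 y - t := by
          have h := hf t ht (dist x0 y) ⟨dist_nonneg, le_refl _⟩
          rw [hfd] at h; rw [h, abs_of_nonpos (by linarith [ht.2]), neg_sub]
        have h3 : dist x0 (u • f t) = t := by
          have h := dist_smul u x0 (f t)
          rw [hx0 u] at h; rw [h, h1]
        have h4 : dist (u • f t) y = dist x0 y - t := by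
          have h := dist_smul u (f t) y
          rw [hy u] at h; rw [h, h2]
        exact between_unique (x := x0) (y := y) (by rw [h3, h4]; ring) (by rw [h1, h2]; ring) (by rw [h3, h1])
      · intro u
        ext z
        rw [Set.mem_smul_set_iff_inv_smul_mem]
        simp only [Set.mem_setOf_eq]
        constructor
        · intro h v
          have h1 := h u
          rw [smul_inv_smul] at h1
          rw [← h1.symm]  -- z = u⁻¹ • z
          exact h v
        · intro h v
          rw [h u⁻¹]
          exact h v
    · exact ⟨hcl, hne, hconn, hinv⟩
  obtain ⟨hXucl, hXune, hXuconn, hXuinv⟩ := props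
  obtain ⟨p0, hp0⟩ := hXune
  -- infDist is invariant under the action
  have hinf : ∀ (u : U) (z : X), infDist (u • z) Xu = infDist z Xu := by
    intro u z
    conv_lhs => rw [← hXuinv u, ← Set.image_smul]
    exact infDist_image (isometry_smul X u)
  -- the closed D-neighbourhood of Xu
  set N : Set X := {z | infDist z Xu ≤ D} with hNdef
  have hXuN : Xu ⊆ N := fun z hz => by
    show infDist z Xu ≤ D
    rw [infDist_zero_of_mem hz]; exact hD
  have hEUN : EU U ⊆ N := by
    rintro z ⟨u, hu1, huz⟩
    obtain ⟨q, hq, hqd⟩ := exists_nearest hXucl hXuconn hp0 z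
    have huq : u • q ∈ Xu := by
      have h := Set.smul_mem_smul_set (a := u) hq
      rwa [hXuinv u] at h
    have hduq : dist z (u • q) = infDist z Xu := by
      have h := dist_smul u z q
      rw [huz] at h
      rw [h, hqd]
    have hqq : q = u • q := nearest_unique hXuconn hq huq hqd hduq
    show infDist z Xu ≤ D
    rw [← hqd]
    exact hacyl u hu1 z q huz hqq.symm
  have hNcl : IsClosed N := isClosed_le (continuous_infDist_pt Xu) continuous_const
  have hNinv : ∀ u : U, u • N = N := by
    intro u
    ext z
    rw [Set.mem_smul_set_iff_inv_smul_mem]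
    show infDist (u⁻¹ • z) Xu ≤ D ↔ infDist z Xu ≤ D
    rw [hinf u⁻¹ z]
  have hNconn : IsPreconnected N := by
    apply isPreconnected_of_forall p0
    intro y hy
    obtain ⟨q, hq, hqd⟩ := exists_nearest hXucl hXuconn hp0 y
    obtain ⟨f, hf0, hfd, hf⟩ := IsRTree.exists_geodesic y q
    refine ⟨Xu ∪ f '' Set.Icc 0 (dist y q), ?_, Or.inl hp0,
      Or.inr ⟨0, ⟨le_refl _, dist_nonneg⟩, hf0⟩, ?_⟩
    · rintro z (hz | ⟨t, ht, rfl⟩)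
      · exact hXuN hz
      · show infDist (f t) Xu ≤ D
        have h1 : dist (f t) q = dist y q - t := by
          have h := hf t ht (dist y q) ⟨dist_nonneg, le_refl _⟩
          rw [hfd] at h; rw [h, abs_of_nonpos (by linarith [ht.2]), neg_sub]
        have h2 : infDist (f t) Xu ≤ dist (f t) q := infDist_le_dist_of_mem hq
        have h3 : infDist y Xu ≤ D := hy
        rw [← hqd] at h3
        linarith [ht.1]
    · exact IsPreconnected.union q hq ⟨dist y q, ⟨dist_nonneg, le_refl _⟩, hfd⟩
        hXuconn (geodesic_image_preconnected hf)
  have hNsubtree : IsSubtree N := ⟨hNcl, ⟨p0, hXuN hp0⟩, hNconn⟩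
  have hsub : XU' ⊆ N := hXU'min N hNsubtree hNinv (Set.union_subset hXuN hEUN)
  constructor
  · intro x hx
    exact hsub hx
  · intro x hx
    have hxX : x ∈ XU' := hXU'contains (Or.inl hx)
    have h := infDist_le_dist_of_mem (x := x) hxX
    rw [dist_self] at h
    linarith
end

section
/- Let U be a group acting by isometries on an ℝ-tree X and let δ ≥ 0. Then the set E_δ(U) = { x ∈ X : d(u·x, x) ≤ 100δ for some u ∈ U with u ≠ 1 } is contained in the closed 50δ-neighborhood of X(U). More precisely: if x ∈ E_δ(U) and y ∈ X(U) satisfies d(x, y) = d(x, X(U)), then d(x, y) ≤ 50δ. -/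
open Metric Pointwise

/-- The set `E_δ(U)` of points moved at most `100δ` by some nontrivial element of `U`. -/
def EdeltaU (U : Type*) {X : Type*} [Group U] [MetricSpace X] [MulAction U X]
    (δ : ℝ) : Set X :=
  {x : X | ∃ u : U, u ≠ 1 ∧ dist (u • x) x ≤ 100 * δ}

namespace RTreeAux

variable {X : Type*} [MetricSpace X]

/-- Gromov product of `a`, `b` at `w`. -/
noncomputable def gp (w a b : X) : ℝ := (dist w a + dist w b - dist a b) / 2

/-- `b` lies between `a` and `c`. -/
def Btw (a b c : X) : Prop := dist a b + dist b c = dist a c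

lemma gp_def (w a b : X) : gp w a b = (dist w a + dist w b - dist a b) / 2 := rfl

lemma gp_nonneg (w a b : X) : 0 ≤ gp w a b := by
  have h := dist_triangle a w b
  have e := dist_comm a w
  unfold gp; linarith

lemma btw_iff_gp {a b c : X} : Btw a b c ↔ gp b a c = 0 := by
  unfold Btw gp
  have e := dist_comm a b
  constructor <;> intro h <;> linarith

lemma btw_symm {a b c : X} (h : Btw a b c) : Btw c b a := by
  unfold Btw at *
  have e1 := dist_comm a b; have e2 := dist_comm b c; have e3 := dist_comm a c
  linarith

lemma btw_self_left (a c : X) : Btw a a c := by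
  unfold Btw; simp

lemma btw_concat {a b c d : X} (h1 : Btw a b c) (h2 : Btw a c d) :
    Btw a b d ∧ Btw b c d := by
  unfold Btw at *
  have t1 := dist_triangle a b d
  have t2 := dist_triangle b c d
  constructor <;> linarith

lemma gp_min_le [IsRTree X] (w a b c : X) : min (gp w a b) (gp w b c) ≤ gp w a c := by
  have h := IsRTree.fourPoint a c b w
  have e1 := dist_comm w a; have e2 := dist_comm w b; have e3 := dist_comm w c
  have e4 := dist_comm c b
  rcases le_total (dist a w + dist c b) (dist a b + dist c w) with h1 | h1
  · rw [max_eq_left h1] at h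
    refine (min_le_left _ _).trans ?_
    unfold gp; linarith
  · rw [max_eq_right h1] at h
    refine (min_le_right _ _).trans ?_
    unfold gp; linarith

lemma exists_point_on [IsRTree X] (a b : X) {t : ℝ} (h0 : 0 ≤ t) (h1 : t ≤ dist a b) :
    ∃ p : X, dist a p = t ∧ dist p b = dist a b - t := by
  obtain ⟨f, hf0, hfd, hiso⟩ := IsRTree.exists_geodesic a b
  refine ⟨f t, ?_, ?_⟩
  · have h := hiso 0 ⟨le_refl 0, dist_nonneg⟩ t ⟨h0, h1⟩
    rw [hf0] at h
    rw [h, abs_of_nonpos (by linarith)]; ring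
  · have h := hiso t ⟨h0, h1⟩ (dist a b) ⟨dist_nonneg, le_refl _⟩
    rw [hfd] at h
    rw [h, abs_of_nonpos (by linarith)]; ring

lemma exists_midpoint [IsRTree X] (a b : X) :
    ∃ m : X, Btw a m b ∧ dist a m = dist a b / 2 ∧ dist m b = dist a b / 2 := by
  obtain ⟨p, hp1, hp2⟩ := exists_point_on a b (t := dist a b / 2)
    (by positivity) (by linarith [dist_nonneg (x := a) (y := b)])
  exact ⟨p, by unfold Btw; linarith, hp1, by linarith⟩

lemma exists_median [IsRTree X] (a b c : X) :
    ∃ y : X, Btw a y b ∧ Btw a y c ∧ Btw b y c ∧ dist a y = gp a b c := by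
  have h0 : 0 ≤ gp a b c := gp_nonneg a b c
  have h1 : gp a b c ≤ dist a b := by
    have := dist_triangle a b c; unfold gp; linarith
  have h1' : gp a b c ≤ dist a c := by
    have := dist_triangle a c b
    have e := dist_comm c b
    unfold gp; linarith
  obtain ⟨p, hp1, hp2⟩ := exists_point_on a b h0 h1
  obtain ⟨q, hq1, hq2⟩ := exists_point_on a c h0 h1'
  have gpb : gp a p b = gp a b c := by
    linarith [gp_def a p b, hp1, hp2]
  have gcq : gp a c q = gp a b c := by
    linarith [gp_def a c q, hq1, hq2, dist_comm c q]
  have c1 : gp a b c ≤ gp a p c := by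
    have h := gp_min_le a p b c
    rw [gpb, min_self] at h; exact h
  have c2 : gp a b c ≤ gp a p q := by
    have h := gp_min_le a p c q
    calc gp a b c = min (gp a b c) (gp a b c) := (min_self _).symm
      _ ≤ min (gp a p c) (gp a c q) := min_le_min c1 (le_of_eq gcq.symm)
      _ ≤ gp a p q := h
  have hpq : dist p q ≤ 0 := by
    linarith [gp_def a p q, hp1, hq1, c2]
  have hpq0 : p = q :=
    eq_of_dist_eq_zero (le_antisymm hpq dist_nonneg)
  subst hpq0
  refine ⟨p, ?_, ?_, ?_, hp1⟩
  · unfold Btw; linarith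
  · unfold Btw; linarith
  · unfold Btw; linarith [gp_def a b c, dist_comm b p]

lemma btw_order [IsRTree X] {a p q z : X} (h1 : Btw a p z) (h2 : Btw a q z)
    (h3 : dist a p ≤ dist a q) : Btw a p q := by
  have g1 : gp a p z = dist a p := by
    unfold Btw at h1; unfold gp; linarith
  have g2 : gp a z q = dist a q := by
    unfold Btw at h2
    have e := dist_comm q z
    unfold gp; linarith
  have h := gp_min_le a p z q
  rw [g1, g2, min_eq_left h3] at h
  have t := dist_triangle a p q
  unfold gp at h
  unfold Btw
  have t2 := dist_triangle a q p
  have e := dist_comm q p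
  linarith

lemma btw_strict_concat [IsRTree X] {a b c d : X} (h1 : Btw a b c) (h2 : Btw b c d)
    (h3 : b ≠ c) : Btw a c d := by
  have g1 : gp c b a = dist b c := by
    unfold Btw at h1
    have e1 := dist_comm b c; have e2 := dist_comm a c; have e3 := dist_comm a b
    unfold gp; linarith
  have g2 : gp c b d = 0 := by
    unfold Btw at h2
    have e1 := dist_comm b c
    unfold gp; linarith
  have h := gp_min_le c b a d
  rw [g2, g1] at h
  have hbc : 0 < dist b c := dist_pos.mpr h3
  have h4 : gp c a d ≤ 0 := by
    rcases min_le_iff.mp h with h' | h' <;> linarith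
  have h5 : gp c a d = 0 := le_antisymm h4 (gp_nonneg _ _ _)
  exact btw_iff_gp.mpr h5

/-- Connected subsets of ℝ-trees are geodesically convex. -/
lemma btw_mem [IsRTree X] {T : Set X} (hT : IsPreconnected T) {a b p : X}
    (ha : a ∈ T) (hb : b ∈ T) (hp : Btw a p b) : p ∈ T := by
  by_contra hpT
  set A : Set X := {z : X | Btw a p z ∧ p ≠ z} with hA
  set B : Set X := {z : X | ¬ Btw a p z} with hB
  have hAopen : IsOpen A := by
    rw [Metric.isOpen_iff]
    rintro z ⟨hz1, hz2⟩
    refine ⟨dist p z, dist_pos.mpr hz2, ?_⟩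
    intro z' hz'
    rw [mem_ball] at hz'
    have hzz' : dist z z' < dist p z := by rw [dist_comm]; exact hz'
    obtain ⟨y, hy1, hy2, _, hy4⟩ := exists_median a z z'
    have dzy : dist z y ≤ dist z z' := by
      unfold Btw at hy1
      have t := dist_triangle a z' z
      have e1 := dist_comm z' z; have e2 := dist_comm y z
      unfold gp at hy4; linarith
    have day : dist a p ≤ dist a y := by
      unfold Btw at hy1 hz1
      have e2 := dist_comm y z
      linarith
    have hapy : Btw a p y := btw_order hz1 hy1 day
    have hapz' : Btw a p z' := (btw_concat hapy hy2).1
    have hpz' : p ≠ z' := by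
      have t := dist_triangle p z' z
      have e := dist_comm z' z
      exact dist_pos.mp (by linarith)
    exact ⟨hapz', hpz'⟩
  have hBopen : IsOpen B := by
    have hclosed : IsClosed {z : X | dist a p + dist p z = dist a z} :=
      isClosed_eq (continuous_const.add (continuous_const.dist continuous_id))
        (continuous_const.dist continuous_id)
    exact hclosed.isOpen_compl
  have hcover : T ⊆ A ∪ B := by
    intro z hz
    by_cases h : Btw a p z
    · left
      refine ⟨h, ?_⟩
      intro he; exact hpT (he ▸ hz)
    · right; exact h
  have hTA : (T ∩ A).Nonempty := by
    refine ⟨b, hb, hp, ?_⟩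
    intro he; exact hpT (he ▸ hb)
  have hTB : (T ∩ B).Nonempty := by
    refine ⟨a, ha, ?_⟩
    intro h
    unfold Btw at h
    have e := dist_comm p a
    have h0 : dist p a = 0 := by
      have hd := dist_self a
      have h1 := dist_nonneg (x := a) (y := p)
      have h2 := dist_nonneg (x := p) (y := a)
      linarith
    exact hpT (by rw [eq_of_dist_eq_zero h0]; exact ha)
  obtain ⟨z, _, hzA, hzB⟩ := hT A B hAopen hBopen hcover hTA hTB
  exact hzB hzA.1

section Group

variable {U : Type*} [Group U] [MulAction U X] [IsIsometricSMul U X]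

lemma btw_smul (u : U) {a b c : X} (h : Btw a b c) : Btw (u • a) (u • b) (u • c) := by
  unfold Btw at *
  rw [dist_smul, dist_smul, dist_smul]; exact h

lemma pow_smul_fixed (u : U) (m : X) (h : u • m = m) : ∀ n : ℕ, u ^ n • m = m := by
  intro n
  induction n with
  | zero => simp
  | succ k ih => rw [pow_succ, mul_smul, h, ih]

/-- Dichotomy for the midpoint `m` of `[x, u x]`: either `u` fixes `m`, or `m`
translates along an axis: `u m` lies between `m` and `u² m`. -/
lemma midpoint_dichotomy [IsRTree X] (u : U) (x m : X)
    (hb : Btw x m (u • x))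
    (h1 : dist x m = dist x (u • x) / 2)
    (h2 : dist m (u • x) = dist x (u • x) / 2) :
    u • m = m ∨ Btw m (u • m) (u • (u • m)) := by
  set d := dist x (u • x) with hd
  set y1 := u • x with hy1
  set y2 := u • y1 with hy2
  set y3 := u • y2 with hy3
  set m1 := u • m with hm1
  set m2 := u • m1 with hm2
  have f1 : dist y1 y2 = d := by rw [hy1, hy2, dist_smul]
  have f2 : dist y1 m1 = d / 2 := by rw [hy1, hm1, dist_smul, h1]
  have f3 : dist m1 y2 = d / 2 := by rw [hy2, hm1, dist_smul, h2]
  have f4 : Btw y1 m1 y2 := btw_smul u hb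
  have f5 : dist m1 m2 = dist m m1 := by rw [hm2, dist_smul]
  have f6 : dist m2 y2 = d / 2 := by
    rw [hy2, hm2, dist_smul, dist_comm m1 y1, f2]
  set s := gp y1 x y2 with hsdef
  have hsval : s = (d + d - dist x y2) / 2 := by
    rw [hsdef, gp_def, dist_comm y1 x, f1]
  have g1 : gp y1 m x = d / 2 := by
    have e1 := dist_comm m y1; have e2 := dist_comm x y1; have e3 := dist_comm x m
    rw [gp_def]; linarith
  have g2 : gp y1 y2 m1 = d / 2 := by
    have e1 := dist_comm m1 y2
    rw [gp_def]; linarith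
  have c1 : min s (d / 2) ≤ gp y1 x m1 := by
    have h := gp_min_le y1 x y2 m1
    rw [g2] at h; exact h
  have c2 : min (d / 2) (gp y1 x m1) ≤ gp y1 m m1 := by
    have h := gp_min_le y1 m x m1
    rw [g1] at h; exact h
  have expand : gp y1 m m1 = (d / 2 + d / 2 - dist m m1) / 2 := by
    rw [gp_def, dist_comm y1 m, h2, f2]
  rcases le_total (d / 2) s with hs | hs
  · -- elliptic case
    left
    have hc1 : d / 2 ≤ gp y1 x m1 := by
      rw [min_eq_right hs] at c1; exact c1
    have hc2 : d / 2 ≤ gp y1 m m1 := le_trans (le_min le_rfl hc1) c2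
    have hmm1 : dist m m1 ≤ 0 := by rw [expand] at hc2; linarith
    exact (eq_of_dist_eq_zero (le_antisymm hmm1 dist_nonneg)).symm
  · -- hyperbolic (or boundary) case
    obtain ⟨c, hcm1, hcm2, hcm3, hcm4⟩ := exists_median y1 x y2
    have dxc : dist x c = d - s := by
      unfold Btw at hcm1
      have e1 := dist_comm c x; have e2 := dist_comm y1 x
      linarith
    have dcy2 : dist c y2 = d - s := by
      unfold Btw at hcm2; linarith
    have dxy2 : dist x y2 = 2 * d - 2 * s := by
      unfold Btw at hcm3; linarith
    have h' : s ≤ gp y1 x m1 := by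
      rw [min_eq_left hs] at c1; exact c1
    have hup : s ≤ gp y1 m m1 := le_trans (le_min hs h') c2
    have hupper : dist m m1 ≤ d - 2 * s := by rw [expand] at hup; linarith
    have hlower : d - 2 * s ≤ dist m m1 := by
      have t1 := dist_triangle x m y2
      have t2 := dist_triangle m m1 y2
      linarith
    have hL : dist m m1 = d - 2 * s := le_antisymm hupper hlower
    by_cases h0 : dist m m1 = 0
    · left; exact (eq_of_dist_eq_zero h0).symm
    · right
      have hxc : Btw x c y1 := btw_symm hcm1
      have hxmc : Btw x m c := btw_order hb hxc (by rw [h1, dxc]; linarith)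
      have hxmy2 : Btw x m y2 := (btw_concat hxmc hcm3).1
      have dmy2 : dist m y2 = dist m m1 + d / 2 := by
        unfold Btw at hxmy2; linarith
      have g3 : gp m1 m y2 = 0 := by
        rw [gp_def]; linarith [dist_comm m m1, dist_comm m1 m]
      have g4 : gp m1 m2 y2 = dist m m1 / 2 := by
        rw [gp_def]; linarith
      have hmin := gp_min_le m1 m m2 y2
      rw [g3, g4] at hmin
      have hpos : 0 < dist m m1 :=
        lt_of_le_of_ne dist_nonneg (Ne.symm h0)
      have hle : gp m1 m m2 ≤ 0 := by
        rcases min_le_iff.mp hmin with h | h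
        · exact h
        · linarith
      exact btw_iff_gp.mpr (le_antisymm hle (gp_nonneg _ _ _))

lemma dist_pow_chain [IsRTree X] (u : U) (m : X)
    (h : Btw m (u • m) (u • (u • m))) (hne : u • m ≠ m) :
    ∀ n : ℕ, Btw m (u ^ n • m) (u ^ (n + 1) • m) ∧
      dist m (u ^ n • m) = n * dist m (u • m) := by
  intro n
  induction n with
  | zero =>
    constructor
    · have : u ^ (0 + 1) • m = u • m := by rw [pow_one]
      rw [this, pow_zero, one_smul]; exact btw_self_left m (u • m)
    · simp
  | succ k ih =>
    obtain ⟨ihb, ihd⟩ := ih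
    have e1 : u ^ (k + 1) • m = u ^ k • (u • m) := by rw [pow_succ, mul_smul]
    have e2 : u ^ (k + 2) • m = u ^ k • (u • (u • m)) := by
      rw [pow_succ, pow_succ, mul_smul, mul_smul]
    have dstep : dist (u ^ k • m) (u ^ (k + 1) • m) = dist m (u • m) := by
      rw [e1, dist_smul]
    have step : Btw (u ^ k • m) (u ^ (k + 1) • m) (u ^ (k + 2) • m) := by
      rw [e1, e2]; exact btw_smul (u ^ k) h
    have hnepts : u ^ k • m ≠ u ^ (k + 1) • m := by
      intro he
      have : dist (u ^ k • m) (u ^ (k + 1) • m) = 0 := by rw [he, dist_self]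
      rw [dstep] at this
      exact hne (eq_of_dist_eq_zero (by rw [dist_comm]; exact this))
    refine ⟨btw_strict_concat ihb step hnepts, ?_⟩
    unfold Btw at ihb
    rw [← ihb, ihd, dstep]
    push_cast; ring

lemma dist_pow [IsRTree X] (u : U) (m : X)
    (h : Btw m (u • m) (u • (u • m))) (n : ℕ) :
    dist m (u ^ n • m) = n * dist m (u • m) := by
  by_cases hf : u • m = m
  · rw [pow_smul_fixed u m hf n, dist_self, hf, dist_self, mul_zero]
  · exact (dist_pow_chain u m h hf n).2

lemma dist_zpow [IsRTree X] (u : U) (m : X)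
    (h : Btw m (u • m) (u • (u • m))) (i : ℤ) :
    dist m (u ^ i • m) = |(i : ℝ)| * dist m (u • m) := by
  obtain ⟨n, hn | hn⟩ := Int.eq_nat_or_neg i
  · subst hn
    rw [zpow_natCast, dist_pow u m h n]
    push_cast
    rw [abs_of_nonneg (by positivity)]
  · subst hn
    have e : (u ^ (n : ℤ)) • (u ^ (-(n : ℤ))) • m = m := by
      rw [smul_smul, ← zpow_add]; simp
    have c : dist m (u ^ (-(n : ℤ)) • m) = dist m (u ^ n • m) := by
      calc dist m (u ^ (-(n : ℤ)) • m)
          = dist (u ^ (n : ℤ) • m) (u ^ (n : ℤ) • u ^ (-(n : ℤ)) • m) :=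
            (dist_smul _ _ _).symm
        _ = dist (u ^ (n : ℤ) • m) m := by rw [e]
        _ = dist m (u ^ n • m) := by rw [dist_comm, zpow_natCast]
    rw [c, dist_pow u m h n]
    push_cast
    rw [abs_neg, abs_of_nonneg (by positivity)]

lemma dist_zpow_pair (u : U) (a b : X) (i j : ℤ) :
    dist (u ^ i • a) (u ^ j • b) = dist a (u ^ (j - i) • b) := by
  calc dist (u ^ i • a) (u ^ j • b)
      = dist (u ^ (-i) • u ^ i • a) (u ^ (-i) • u ^ j • b) := (dist_smul _ _ _).symm
    _ = dist a (u ^ (j - i) • b) := by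
        rw [smul_smul, smul_smul, ← zpow_add, ← zpow_add]
        have e1 : -i + i = 0 := by ring
        have e2 : -i + j = j - i := by ring
        rw [e1, e2, zpow_zero, one_smul]

lemma no_lin_bound {c K : ℝ} (hc : 0 < c) (h : ∀ n : ℕ, (n : ℝ) * c ≤ K) : False := by
  obtain ⟨n, hn⟩ := exists_nat_gt (K / c)
  have h2 := h n
  rw [div_lt_iff₀ hc] at hn
  linarith

lemma eq_of_lin_bound {a b K : ℝ}
    (h : ∀ n : ℕ, (n : ℝ) * a ≤ n * b + K ∧ (n : ℝ) * b ≤ n * a + K) : a = b := by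
  by_contra hne
  have h1 : 0 < |a - b| := abs_sub_pos.mpr hne
  refine no_lin_bound (K := K) h1 fun n => ?_
  rcases le_total a b with hab | hab
  · have e : |a - b| = b - a := by rw [abs_of_nonpos (by linarith)]; ring
    have e2 : (n : ℝ) * (b - a) = n * b - n * a := by ring
    rw [e]; linarith [(h n).2]
  · have e : |a - b| = a - b := abs_of_nonneg (by linarith)
    have e2 : (n : ℝ) * (a - b) = n * a - n * b := by ring
    rw [e]; linarith [(h n).1]

lemma smul_mem_of_inv {T : Set X} (hinv : ∀ g : U, g • T = T) (g : U) {z : X}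
    (hz : z ∈ T) : g • z ∈ T := by
  rw [← hinv g]; exact Set.smul_mem_smul_set hz

/-- Main geometric lemma: the midpoint of `[x, u x]` is in any `U`-invariant
connected set, unless it is fixed by `u`. -/
lemma mid_mem [IsRTree X] {T : Set X} (hconn : IsPreconnected T)
    (hinv : ∀ g : U, g • T = T) (u : U) {z : X} (hz : z ∈ T) {x m : X}
    (hb : Btw x m (u • x)) (h1 : dist x m = dist x (u • x) / 2)
    (h2 : dist m (u • x) = dist x (u • x) / 2) :
    m ∈ T ∨ u • m = m := by
  by_cases hum : u • m = m
  · exact Or.inr hum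
  rcases midpoint_dichotomy u x m hb h1 h2 with hfix | hbm
  · exact Or.inr hfix
  left
  have hlpos : 0 < dist m (u • m) := dist_pos.mpr fun he => hum he.symm
  set ℓ := dist m (u • m) with hldef
  -- midpoint of [z, u z]
  obtain ⟨w, hwb, hw1, hw2⟩ := exists_midpoint z (u • z)
  have hwT : w ∈ T := btw_mem hconn hz (smul_mem_of_inv hinv u hz) hwb
  set D := dist m w with hDdef
  have hDnn : 0 ≤ D := dist_nonneg
  -- w is not fixed by u
  have hwfix : u • w ≠ w := by
    intro hf
    refine no_lin_bound hlpos (K := 2 * D) fun n => ?_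
    have e1 : dist m (u ^ n • m) = n * ℓ := dist_pow u m hbm n
    have e2 : u ^ n • w = w := pow_smul_fixed u w hf n
    have t1 := dist_triangle m w (u ^ n • m)
    have t2 : dist w (u ^ n • m) = dist w m := by
      conv_lhs => rw [← e2]
      rw [dist_smul]
    have e3 := dist_comm w m
    linarith
  rcases midpoint_dichotomy u z w hwb hw1 hw2 with hf | hwbtw
  · exact absurd hf hwfix
  -- translation lengths agree
  have hlz : dist w (u • w) = ℓ := by
    refine eq_of_lin_bound (K := 2 * D) fun n => ?_
    have e1 : dist m (u ^ n • m) = n * ℓ := dist_pow u m hbm n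
    have e2 : dist w (u ^ n • w) = n * dist w (u • w) := dist_pow u w hwbtw n
    have e3 : dist (u ^ n • w) (u ^ n • m) = dist w m := dist_smul _ _ _
    have t1 := dist_triangle m w (u ^ n • m)
    have t2 := dist_triangle w (u ^ n • w) (u ^ n • m)
    have t3 := dist_triangle w m (u ^ n • w)
    have t4 := dist_triangle m (u ^ n • m) (u ^ n • w)
    have e4 := dist_comm w m
    have e5 := dist_comm (u ^ n • m) (u ^ n • w)
    constructor <;> linarith
  have zm := dist_zpow u m hbm
  have zw := dist_zpow u w hwbtw
  obtain ⟨n, hn⟩ := exists_nat_gt (D / ℓ)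
  have hnl : D < n * ℓ := by
    rw [div_lt_iff₀ hlpos] at hn; exact hn
  set P1 := u ^ (n : ℤ) • m with hP1
  set P2 := u ^ (n : ℤ) • w with hP2
  set P3 := u ^ (-(n : ℤ)) • m with hP3
  set P4 := u ^ (-(n : ℤ)) • w with hP4
  have d1 : dist m P1 = n * ℓ := by
    rw [hP1, zm]; push_cast; rw [abs_of_nonneg (by positivity)]
  have d3 : dist m P3 = n * ℓ := by
    rw [hP3, zm]; push_cast; rw [abs_neg, abs_of_nonneg (by positivity)]
  have dP1P3 : dist P1 P3 = 2 * n * ℓ := by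
    rw [hP1, hP3, dist_zpow_pair, zm]
    push_cast
    rw [show -(n : ℝ) - n = -(2 * n) by ring, abs_neg,
      abs_of_nonneg (by positivity)]
  have dP1P2 : dist P1 P2 = D := by rw [hP1, hP2, dist_smul]
  have dP3P4 : dist P3 P4 = D := by rw [hP3, hP4, dist_smul]
  have dP2low : n * ℓ - D ≤ dist m P2 := by
    have t := dist_triangle m P1 P2
    have t2 := dist_triangle m P2 P1
    have e := dist_comm P2 P1
    linarith
  have dP4low : n * ℓ - D ≤ dist m P4 := by
    have t := dist_triangle m P3 P4
    have t2 := dist_triangle m P4 P3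
    have e := dist_comm P4 P3
    linarith
  have dP2P3 : 2 * n * ℓ - D ≤ dist P2 P3 := by
    have e1 : dist P2 P3 = dist w (u ^ (-(n : ℤ) - n) • m) := by
      rw [hP2, hP3, dist_zpow_pair]
    have e2 : dist m (u ^ (-(n : ℤ) - n) • m) = 2 * n * ℓ := by
      rw [zm]
      push_cast
      rw [show -(n : ℝ) - n = -(2 * n) by ring, abs_neg,
        abs_of_nonneg (by positivity)]
    have t := dist_triangle m w (u ^ (-(n : ℤ) - n) • m)
    have e3 := dist_comm w m
    linarith [e1, e2, t]
  have dP2P4 : dist P2 P4 = 2 * n * ℓ := by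
    rw [hP2, hP4, dist_zpow_pair, zw]
    push_cast
    rw [show -(n : ℝ) - n = -(2 * n) by ring, abs_neg,
      abs_of_nonneg (by positivity), hlz]
  -- Gromov product computations at m
  have gpA : gp m P1 P3 = 0 := by rw [gp_def, d1, d3, dP1P3]; ring
  have gpB : n * ℓ - D ≤ gp m P1 P2 := by
    rw [gp_def, d1, dP1P2]; linarith
  have gpC : gp m P2 P3 = 0 := by
    have h' := gp_min_le m P1 P2 P3
    rw [gpA] at h'
    have hle : gp m P2 P3 ≤ 0 := by
      rcases min_le_iff.mp h' with h'' | h''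
      · linarith
      · exact h''
    exact le_antisymm hle (gp_nonneg _ _ _)
  have gpD : n * ℓ - D ≤ gp m P4 P3 := by
    rw [gp_def, d3]
    have e := dist_comm P4 P3
    linarith
  have gpE : gp m P2 P4 = 0 := by
    have h' := gp_min_le m P2 P4 P3
    rw [gpC] at h'
    have hle : gp m P2 P4 ≤ 0 := by
      rcases min_le_iff.mp h' with h'' | h''
      · exact h''
      · linarith
    exact le_antisymm hle (gp_nonneg _ _ _)
  have hBtw : Btw P2 m P4 := btw_iff_gp.mpr gpE
  exact btw_mem hconn (smul_mem_of_inv hinv (u ^ (n : ℤ)) hwT)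
    (smul_mem_of_inv hinv (u ^ (-(n : ℤ))) hwT) hBtw

end Group

end RTreeAux


/-- `E_δ(U)` is contained in the closed `50δ`-neighborhood of `X(U)`; more precisely,
a nearest point of `X(U)` to a point of `E_δ(U)` is at distance at most `50δ`. -/
theorem Edelta_subset_nbhd_XofU
    {U : Type*} [Group U] {X : Type*} [MetricSpace X] [IsRTree X]
    [MulAction U X] [IsIsometricSMul U X]
    (δ : ℝ) (hδ : 0 ≤ δ)
    (Xu : Set X) (hXu : IsXU U Xu)
    (XU' : Set X) (hXU' : IsSmallestInvariantSubtreeContaining U (Xu ∪ EU U) XU') :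
    (∀ x ∈ EdeltaU U (X := X) δ, Metric.infDist x XU' ≤ 50 * δ) ∧
      ∀ x ∈ EdeltaU U (X := X) δ, ∀ y ∈ XU',
        dist x y = Metric.infDist x XU' → dist x y ≤ 50 * δ := by
  obtain ⟨⟨hsub, hinv, hAsub⟩, -⟩ := hXU'
  obtain ⟨hclosed, hconn⟩ := hsub
  have hne : XU'.Nonempty := hconn.1
  have key : ∀ x ∈ EdeltaU U (X := X) δ, Metric.infDist x XU' ≤ 50 * δ := by
    intro x hx
    obtain ⟨u, hu, hud⟩ := hx
    obtain ⟨m, hbm, hm1, hm2⟩ := RTreeAux.exists_midpoint x (u • x)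
    obtain ⟨z, hzT⟩ := hne
    have hmem : m ∈ XU' := by
      rcases RTreeAux.mid_mem hconn.2 hinv u hzT hbm hm1 hm2 with h | h
      · exact h
      · exact hAsub (Or.inr ⟨u, hu, h⟩)
    have hdd : dist x (u • x) ≤ 100 * δ := by
      rw [dist_comm]; exact hud
    calc Metric.infDist x XU' ≤ dist x m := Metric.infDist_le_dist_of_mem hmem
      _ = dist x (u • x) / 2 := hm1
      _ ≤ 50 * δ := by linarith
  exact ⟨key, fun x hx y hy heq => by rw [heq]; exact key x hx⟩
end
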